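/- Periodic-erasure counting bound: Let f_1, f_2, ..., f_m be random variables each with H(f_i) ≤ nR, and let (s_t) be a Markov source such that for each k = 1, ..., K, H(s_{v_k} | f_{A_k}) ≤ nε for disjoint consecutive index sets A_1, ..., A_K whose union has size m, where s_{v_1}, ..., s_{v_K} satisfy H(s_{v_k} | s_{v_{k-1}}) ≥ n h for all k ≥ 2 and form a Markov chain s_{v_1} → s_{v_2} → ... → s_{v_K}. Then m n R ≥ (K−1) n h − K n ε, i.e., R ≥ ((K−1) h − K ε)/m. -/

import Mathlib

open Finset

variable {Ω : Type} [Fintype Ω]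

/-- Probability that the random variable `X` takes value `x`, under weights `μ`. -/
noncomputable def pr (μ : Ω → ℝ) {α : Type} [Fintype α] [DecidableEq α]
    (X : Ω → α) (x : α) : ℝ :=
  ∑ ω, if X ω = x then μ ω else 0

/-- Shannon entropy (base 2) of the random variable `X`. -/
noncomputable def ent (μ : Ω → ℝ) {α : Type} [Fintype α] [DecidableEq α]
    (X : Ω → α) : ℝ :=
  -∑ x, pr μ X x * Real.logb 2 (pr μ X x)

/-- Conditional Shannon entropy `H(X | Y) = H(X, Y) - H(Y)`. -/
noncomputable def centr (μ : Ω → ℝ) {α β : Type} [Fintype α] [DecidableEq α]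
    [Fintype β] [DecidableEq β] (X : Ω → α) (Y : Ω → β) : ℝ :=
  ent μ (fun ω => (X ω, Y ω)) - ent μ Y

/-- Conditional mutual information `I(X ; Y | Z) = H(X|Z) + H(Y|Z) - H(X,Y|Z)`. -/
noncomputable def mi (μ : Ω → ℝ) {α β γ : Type} [Fintype α] [DecidableEq α]
    [Fintype β] [DecidableEq β] [Fintype γ] [DecidableEq γ]
    (X : Ω → α) (Y : Ω → β) (Z : Ω → γ) : ℝ :=
  centr μ X Z + centr μ Y Z - centr μ (fun ω => (X ω, Y ω)) Z

/-- `μ` is a probability mass function on `Ω`. -/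
structure IsPMF (μ : Ω → ℝ) : Prop where
  nonneg : ∀ ω, 0 ≤ μ ω
  sum_one : ∑ ω, μ ω = 1

section helpers
variable {α β γ : Type} [Fintype α] [DecidableEq α] [Fintype β] [DecidableEq β]
  [Fintype γ] [DecidableEq γ] {μ : Ω → ℝ}

lemma pr_nonneg (hμ : IsPMF μ) (X : Ω → α) (x : α) : 0 ≤ pr μ X x := by
  apply Finset.sum_nonneg
  intro ω _
  split <;> simp [hμ.nonneg ω]

lemma pr_le_one (hμ : IsPMF μ) (X : Ω → α) (x : α) : pr μ X x ≤ 1 := by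
  rw [← hμ.sum_one]
  apply Finset.sum_le_sum
  intro ω _
  split <;> simp [hμ.nonneg ω]

lemma sum_pr (hμ : IsPMF μ) (X : Ω → α) : ∑ x, pr μ X x = 1 := by
  rw [← hμ.sum_one]
  unfold pr
  rw [Finset.sum_comm]
  exact Finset.sum_congr rfl fun ω _ => by
    rw [Finset.sum_ite_eq Finset.univ (X ω) (fun _ => μ ω)]
    simp

lemma sum_mu_comp (X : Ω → α) (g : α → ℝ) :
    ∑ ω, μ ω * g (X ω) = ∑ x, pr μ X x * g x := by
  unfold pr
  simp_rw [Finset.sum_mul, ite_mul, zero_mul]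
  rw [Finset.sum_comm]
  exact Finset.sum_congr rfl fun ω _ => by
    rw [Finset.sum_ite_eq Finset.univ (X ω) (fun x => μ ω * g x)]
    simp

lemma ent_omega (X : Ω → α) :
    ent μ X = -∑ ω, μ ω * Real.logb 2 (pr μ X (X ω)) := by
  rw [ent, sum_mu_comp X (fun x => Real.logb 2 (pr μ X x))]

lemma mu_le_pr (hμ : IsPMF μ) (X : Ω → α) (ω : Ω) : μ ω ≤ pr μ X (X ω) := by
  unfold pr
  refine Finset.single_le_sum (f := fun ω' => if X ω' = X ω then μ ω' else 0)
    (fun ω' _ => ?_) (Finset.mem_univ ω) |>.trans_eq' (by simp)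
  split <;> simp [hμ.nonneg ω']

lemma pr_le_of_implies (hμ : IsPMF μ) {X : Ω → α} {Y : Ω → β} {x : α} {y : β}
    (h : ∀ ω, X ω = x → Y ω = y) : pr μ X x ≤ pr μ Y y := by
  apply Finset.sum_le_sum
  intro ω _
  by_cases hx : X ω = x
  · simp [hx, h ω hx]
  · simp only [hx, if_false]
    split <;> simp [hμ.nonneg ω]

lemma pr_eq_of_maps (hμ : IsPMF μ) {X : Ω → α} {Y : Ω → β}
    (g : α → β) (g' : β → α) (hg : ∀ ω, g (X ω) = Y ω) (hg' : ∀ ω, g' (Y ω) = X ω)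
    (ω : Ω) : pr μ X (X ω) = pr μ Y (Y ω) := by
  apply le_antisymm
  · exact pr_le_of_implies hμ fun ω' h => by rw [← hg ω', h, hg ω]
  · exact pr_le_of_implies hμ fun ω' h => by rw [← hg' ω', h, hg' ω]

lemma ent_eq_of_maps (hμ : IsPMF μ) {X : Ω → α} {Y : Ω → β}
    (g : α → β) (g' : β → α) (hg : ∀ ω, g (X ω) = Y ω) (hg' : ∀ ω, g' (Y ω) = X ω) :
    ent μ X = ent μ Y := by
  rw [ent_omega, ent_omega]
  congr 1
  exact Finset.sum_congr rfl fun ω _ => by rw [pr_eq_of_maps hμ g g' hg hg' ω]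

lemma pr_fst_sum (X : Ω → α) (Z : Ω → γ) (z : γ) :
    ∑ x, pr μ (fun ω => (X ω, Z ω)) (x, z) = pr μ Z z := by
  unfold pr
  rw [Finset.sum_comm]
  refine Finset.sum_congr rfl fun ω _ => ?_
  by_cases hz : Z ω = z
  · simp [Prod.ext_iff, hz]
  · simp [Prod.ext_iff, hz]

lemma ent_nonneg (hμ : IsPMF μ) (X : Ω → α) : 0 ≤ ent μ X := by
  rw [ent, neg_nonneg]
  apply Finset.sum_nonpos
  intro x _
  apply mul_nonpos_of_nonneg_of_nonpos (pr_nonneg hμ X x)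
  exact Real.logb_nonpos (by norm_num) (pr_nonneg hμ X x) (pr_le_one hμ X x)

lemma ent_unique [Unique α] (hμ : IsPMF μ) (X : Ω → α) : ent μ X = 0 := by
  rw [ent]
  have : ∀ x : α, pr μ X x = 1 := by
    intro x
    rw [← hμ.sum_one, pr]
    exact Finset.sum_congr rfl fun ω _ => by simp [Subsingleton.elim (X ω) x]
  simp [this]

lemma master (hμ : IsPMF μ) (X : Ω → α) (Y : Ω → β) (Z : Ω → γ) :
    ent μ (fun ω => (X ω, (Y ω, Z ω))) + ent μ Z
      ≤ ent μ (fun ω => (X ω, Z ω)) + ent μ (fun ω => (Y ω, Z ω)) := by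
  have hlog2 : (0:ℝ) < Real.log 2 := Real.log_pos (by norm_num)
  set W : Ω → α × β × γ := fun ω => (X ω, (Y ω, Z ω)) with hW
  set XZ : Ω → α × γ := fun ω => (X ω, Z ω) with hXZ
  set YZ : Ω → β × γ := fun ω => (Y ω, Z ω) with hYZ
  set p : α × β × γ → ℝ := pr μ W with hp
  set Pa : α × γ → ℝ := pr μ XZ with hPa
  set Pb : β × γ → ℝ := pr μ YZ with hPb
  set Pc : γ → ℝ := pr μ Z with hPc
  set r : α × β × γ → ℝ := fun v =>
    if p v = 0 then 0 else Pa (v.1, v.2.2) * Pb (v.2.1, v.2.2) / (p v * Pc v.2.2) with hr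
  have key : ∀ ω : Ω,
      (μ ω - μ ω * r (W ω)) / Real.log 2
      ≤ μ ω * (Real.logb 2 (p (W ω)) + Real.logb 2 (Pc (Z ω))
        - Real.logb 2 (Pa (XZ ω)) - Real.logb 2 (Pb (YZ ω))) := by
    intro ω
    rcases eq_or_lt_of_le (hμ.nonneg ω) with hμω | hμω
    · simp [← hμω]
    · have hpw : 0 < p (W ω) := lt_of_lt_of_le hμω (mu_le_pr hμ W ω)
      have hA : p (W ω) ≤ Pa (XZ ω) := by
        apply pr_le_of_implies hμ
        intro ω' h
        simp only [hW, hXZ, Prod.ext_iff] at h ⊢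
        exact ⟨h.1, h.2.2⟩
      have hB : p (W ω) ≤ Pb (YZ ω) := by
        apply pr_le_of_implies hμ
        intro ω' h
        simp only [hW, hYZ, Prod.ext_iff] at h ⊢
        exact ⟨h.2.1, h.2.2⟩
      have hC : p (W ω) ≤ Pc (Z ω) := by
        apply pr_le_of_implies hμ
        intro ω' h
        simp only [hW, Prod.ext_iff] at h
        exact h.2.2
      have hA' : 0 < Pa (XZ ω) := lt_of_lt_of_le hpw hA
      have hB' : 0 < Pb (YZ ω) := lt_of_lt_of_le hpw hB
      have hC' : 0 < Pc (Z ω) := lt_of_lt_of_le hpw hC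
      have hrw : r (W ω) = Pa (XZ ω) * Pb (YZ ω) / (p (W ω) * Pc (Z ω)) := by
        rw [hr]
        simp only [hW, hXZ, hYZ]
        rw [if_neg (ne_of_gt hpw)]
      have hrpos : 0 < r (W ω) := by rw [hrw]; positivity
      have hlog : Real.log (r (W ω)) ≤ r (W ω) - 1 :=
        Real.log_le_sub_one_of_pos hrpos
      have hexp : Real.log (r (W ω)) = Real.log (Pa (XZ ω)) + Real.log (Pb (YZ ω))
          - Real.log (p (W ω)) - Real.log (Pc (Z ω)) := by
        rw [hrw, Real.log_div (by positivity) (by positivity),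
            Real.log_mul (ne_of_gt hA') (ne_of_gt hB'),
            Real.log_mul (ne_of_gt hpw) (ne_of_gt hC')]
        ring
      simp only [Real.logb, div_le_iff₀ hlog2]
      have heq : μ ω * (Real.log (p (W ω)) / Real.log 2 + Real.log (Pc (Z ω)) / Real.log 2
          - Real.log (Pa (XZ ω)) / Real.log 2 - Real.log (Pb (YZ ω)) / Real.log 2)
          * Real.log 2
          = -(μ ω * Real.log (r (W ω))) := by
        rw [hexp]; field_simp; ring
      rw [heq]
      nlinarith [hlog, hμω.le]
  have hsum := Finset.sum_le_sum (s := Finset.univ) (fun ω _ => key ω)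
  have h1 : ∑ ω, (μ ω - μ ω * r (W ω)) / Real.log 2
      = (1 - ∑ v, p v * r v) / Real.log 2 := by
    rw [← Finset.sum_div]
    congr 1
    rw [Finset.sum_sub_distrib, hμ.sum_one, sum_mu_comp W r]
  have h2 : ∑ v, p v * r v ≤ 1 := by
    have hterm : ∀ v : α × β × γ, p v * r v ≤
        (if Pc v.2.2 = 0 then 0 else Pa (v.1, v.2.2) * Pb (v.2.1, v.2.2) / Pc v.2.2) := by
      intro v
      have hq : (0:ℝ) ≤ (if Pc v.2.2 = 0 then 0
          else Pa (v.1, v.2.2) * Pb (v.2.1, v.2.2) / Pc v.2.2) := by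
        split
        · exact le_refl 0
        · exact div_nonneg (mul_nonneg (pr_nonneg hμ XZ _) (pr_nonneg hμ YZ _))
            (pr_nonneg hμ Z _)
      rcases eq_or_lt_of_le (pr_nonneg hμ W v) with hpv | hpv
      · rw [hr]
        simp only [← hpv, if_pos rfl]
        rw [show p v = 0 from hpv.symm]  -- hpv : 0 = p v
        simpa using hq
      · have hCv : 0 < Pc v.2.2 := by
          refine lt_of_lt_of_le hpv (pr_le_of_implies hμ (fun ω h => ?_))
          rw [← h]
        have hAv : 0 < Pa (v.1, v.2.2) := by
          refine lt_of_lt_of_le hpv (pr_le_of_implies hμ (fun ω h => ?_))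
          rw [← h]
        have hBv : 0 < Pb (v.2.1, v.2.2) := by
          refine lt_of_lt_of_le hpv (pr_le_of_implies hμ (fun ω h => ?_))
          rw [← h]
        have hpv' : (0:ℝ) < p v := hpv
        rw [hr]
        simp only [if_neg (ne_of_gt hpv'), if_neg (ne_of_gt hCv)]
        refine le_of_eq ?_
        field_simp
    calc ∑ v, p v * r v ≤ ∑ v : α × β × γ,
        (if Pc v.2.2 = 0 then 0 else Pa (v.1, v.2.2) * Pb (v.2.1, v.2.2) / Pc v.2.2) :=
          Finset.sum_le_sum (fun v _ => hterm v)
      _ = ∑ x, ∑ y, ∑ z, (if Pc z = 0 then 0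
            else Pa (x, z) * Pb (y, z) / Pc z) := by
          simp only [Fintype.sum_prod_type]
      _ = ∑ x, ∑ z, ∑ y, (if Pc z = 0 then 0
            else Pa (x, z) * Pb (y, z) / Pc z) :=
          Finset.sum_congr rfl fun x _ => Finset.sum_comm
      _ = ∑ z, ∑ x, ∑ y, (if Pc z = 0 then 0
            else Pa (x, z) * Pb (y, z) / Pc z) := Finset.sum_comm
      _ = ∑ z, Pc z := by
          refine Finset.sum_congr rfl fun z _ => ?_
          by_cases hz : Pc z = 0
          · simp [hz]
          · simp only [if_neg hz]
            have hy : ∀ x : α, ∑ y, Pa (x, z) * Pb (y, z) / Pc z = Pa (x, z) := by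
              intro x
              rw [← Finset.sum_div, ← Finset.mul_sum, hPb, hYZ, pr_fst_sum Y Z z, ← hPc,
                mul_div_assoc, div_self hz, mul_one]
            rw [Finset.sum_congr rfl fun x _ => hy x, hPa, hXZ, pr_fst_sum X Z z, hPc]
      _ = 1 := sum_pr hμ Z
  have hfin : (0:ℝ) ≤ ∑ ω, μ ω * (Real.logb 2 (p (W ω)) + Real.logb 2 (Pc (Z ω))
      - Real.logb 2 (Pa (XZ ω)) - Real.logb 2 (Pb (YZ ω))) := by
    refine le_trans ?_ hsum
    rw [h1]
    apply div_nonneg _ (le_of_lt hlog2)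
    linarith
  have hexpand : ∑ ω, μ ω * (Real.logb 2 (p (W ω)) + Real.logb 2 (Pc (Z ω))
      - Real.logb 2 (Pa (XZ ω)) - Real.logb 2 (Pb (YZ ω)))
      = (∑ ω, μ ω * Real.logb 2 (p (W ω))) + (∑ ω, μ ω * Real.logb 2 (Pc (Z ω)))
      - (∑ ω, μ ω * Real.logb 2 (Pa (XZ ω))) - (∑ ω, μ ω * Real.logb 2 (Pb (YZ ω))) := by
    simp only [mul_add, mul_sub]
    rw [Finset.sum_sub_distrib, Finset.sum_sub_distrib, Finset.sum_add_distrib]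
  rw [ent_omega (μ := μ) W, ent_omega (μ := μ) Z, ent_omega (μ := μ) XZ,
    ent_omega (μ := μ) YZ]
  rw [hexpand] at hfin
  linarith

section derived
variable {α β γ δ : Type} [Fintype α] [DecidableEq α] [Fintype β] [DecidableEq β]
  [Fintype γ] [DecidableEq γ] [Fintype δ] [DecidableEq δ] {μ : Ω → ℝ}

lemma ent_mono (hμ : IsPMF μ) (Y : Ω → β) (Z : Ω → γ) :
    ent μ Z ≤ ent μ (fun ω => (Y ω, Z ω)) := by
  have hm := master hμ (fun ω => (Y ω, Z ω)) Y Z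
  have e1 : ent μ (fun ω => ((Y ω, Z ω), (Y ω, Z ω))) = ent μ (fun ω => (Y ω, Z ω)) :=
    ent_eq_of_maps hμ Prod.fst (fun v => (v, v)) (fun ω => rfl) (fun ω => rfl)
  have e2 : ent μ (fun ω => ((Y ω, Z ω), Z ω)) = ent μ (fun ω => (Y ω, Z ω)) :=
    ent_eq_of_maps hμ Prod.fst (fun v => (v, v.2)) (fun ω => rfl) (fun ω => rfl)
  linarith

lemma centr_nonneg (hμ : IsPMF μ) (X : Ω → α) (Y : Ω → β) : 0 ≤ centr μ X Y := by
  have := ent_mono hμ X Y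
  rw [centr]
  linarith

lemma ent_pair_le (hμ : IsPMF μ) (X : Ω → α) (Y : Ω → β) :
    ent μ (fun ω => (X ω, Y ω)) ≤ ent μ X + ent μ Y := by
  have hm := master hμ X Y (fun _ : Ω => ())
  have e0 : ent μ (fun _ : Ω => ()) = 0 := ent_unique hμ _
  have e1 : ent μ (fun ω => (X ω, (Y ω, ()))) = ent μ (fun ω => (X ω, Y ω)) :=
    ent_eq_of_maps hμ (fun p => (p.1, p.2.1)) (fun p => (p.1, (p.2, ())))
      (fun ω => rfl) (fun ω => rfl)
  have e2 : ent μ (fun ω => (X ω, ())) = ent μ X :=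
    ent_eq_of_maps hμ Prod.fst (fun x => (x, ())) (fun ω => rfl) (fun ω => rfl)
  have e3 : ent μ (fun ω => (Y ω, ())) = ent μ Y :=
    ent_eq_of_maps hμ Prod.fst (fun x => (x, ())) (fun ω => rfl) (fun ω => rfl)
  linarith

lemma centr_pair_le (hμ : IsPMF μ) (X : Ω → α) (Y : Ω → β) (Z : Ω → γ) :
    centr μ (fun ω => (X ω, Y ω)) Z ≤ centr μ X Z + centr μ Y Z := by
  have hm := master hμ X Y Z
  have e1 : ent μ (fun ω => ((X ω, Y ω), Z ω)) = ent μ (fun ω => (X ω, (Y ω, Z ω))) :=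
    ent_eq_of_maps hμ (fun p => (p.1.1, (p.1.2, p.2))) (fun p => ((p.1, p.2.1), p.2.2))
      (fun ω => rfl) (fun ω => rfl)
  simp only [centr]
  linarith

lemma centr_comp_le (hμ : IsPMF μ) (X : Ω → α) (Y : Ω → β) (g : β → γ) :
    centr μ X Y ≤ centr μ X (fun ω => g (Y ω)) := by
  have hm := master hμ X Y (fun ω => g (Y ω))
  have e1 : ent μ (fun ω => (X ω, Y ω)) = ent μ (fun ω => (X ω, (Y ω, g (Y ω)))) :=
    ent_eq_of_maps hμ (fun p => (p.1, (p.2, g p.2))) (fun p => (p.1, p.2.1))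
      (fun ω => rfl) (fun ω => rfl)
  have e2 : ent μ Y = ent μ (fun ω => (Y ω, g (Y ω))) :=
    ent_eq_of_maps hμ (fun y => (y, g y)) Prod.fst (fun ω => rfl) (fun ω => rfl)
  simp only [centr]
  linarith

lemma ent_swap (hμ : IsPMF μ) (X : Ω → α) (Y : Ω → β) :
    ent μ (fun ω => (X ω, Y ω)) = ent μ (fun ω => (Y ω, X ω)) :=
  ent_eq_of_maps hμ Prod.swap Prod.swap (fun ω => rfl) (fun ω => rfl)

lemma ent_snoc (hμ : IsPMF μ) (k : ℕ) (X : Fin (k+1) → Ω → α) :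
    ent μ (fun ω => fun i => X i ω)
      = ent μ (fun ω => (X (Fin.last k) ω, fun i : Fin k => X i.castSucc ω)) := by
  refine ent_eq_of_maps hμ
    (fun u => (u (Fin.last k), fun i : Fin k => u i.castSucc))
    (fun p => Fin.snoc p.2 p.1) (fun ω => rfl) (fun ω => ?_)
  funext i
  refine Fin.lastCases ?_ (fun j => ?_) i
  · simp
  · simp

lemma ent_snoc_pair (hμ : IsPMF μ) (k : ℕ) (X : Fin (k+1) → Ω → α) (W : Ω → β) :
    ent μ (fun ω => ((fun i => X i ω), W ω))
      = ent μ (fun ω => ((X (Fin.last k) ω, fun i : Fin k => X i.castSucc ω), W ω)) := by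
  refine ent_eq_of_maps hμ
    (fun p => ((p.1 (Fin.last k), fun i : Fin k => p.1 i.castSucc), p.2))
    (fun p => (Fin.snoc p.1.2 p.1.1, p.2)) (fun ω => rfl) (fun ω => ?_)
  simp only [Prod.mk.injEq]
  refine ⟨funext fun i => ?_, trivial⟩
  refine Fin.lastCases ?_ (fun j => ?_) i
  · simp
  · simp

lemma ent_tuple_le (hμ : IsPMF μ) : ∀ (k : ℕ) (X : Fin k → Ω → α),
    ent μ (fun ω => fun i => X i ω) ≤ ∑ i, ent μ (X i) := by
  intro k
  induction k with
  | zero =>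
    intro X
    rw [Finset.univ_eq_empty, Finset.sum_empty]
    exact le_of_eq (ent_unique hμ _)
  | succ k ih =>
    intro X
    rw [ent_snoc hμ k X, Fin.sum_univ_castSucc]
    calc ent μ (fun ω => (X (Fin.last k) ω, fun i : Fin k => X i.castSucc ω))
        ≤ ent μ (X (Fin.last k)) + ent μ (fun ω => fun i : Fin k => X i.castSucc ω) :=
          ent_pair_le hμ _ _
      _ ≤ ent μ (X (Fin.last k)) + ∑ i : Fin k, ent μ (X i.castSucc) := by
          have := ih (fun i => X i.castSucc)
          linarith
      _ = ∑ i : Fin k, ent μ (X i.castSucc) + ent μ (X (Fin.last k)) := by ring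

lemma centr_tuple0 (hμ : IsPMF μ) (X : Fin 0 → Ω → α) (W : Ω → β) :
    centr μ (fun ω => fun i => X i ω) W = 0 := by
  rw [centr]
  have : ent μ (fun ω => ((fun i => X i ω), W ω)) = ent μ W := by
    refine ent_eq_of_maps hμ Prod.snd (fun w => (fun i => i.elim0, w))
      (fun ω => rfl) (fun ω => ?_)
    simp only [Prod.mk.injEq]
    exact ⟨funext fun i => i.elim0, trivial⟩
  rw [this, sub_self]

end derived

/-- periodic-erasure counting bound. Encoder outputs `f₁,…,f_m`
each of entropy at most `nR`; disjoint index sets `T k` covering all `m`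
indices allow Fano-decoding of `sv k`; the `sv` form a Markov chain with
per-step conditional entropy at least `n h`. Then `m n R ≥ (K−1)n h − K n ε`. -/
theorem periodic_erasure_counting_bound
    {S A : Type} [Fintype S] [DecidableEq S] [Fintype A] [DecidableEq A]
    (μ : Ω → ℝ) (hμ : IsPMF μ)
    (m K : ℕ) (hK : 1 ≤ K) (n R h ε : ℝ)
    (hn : 0 < n) (hR : 0 ≤ R) (hh : 0 ≤ h) (hε : 0 ≤ ε)
    (f : Fin m → Ω → A) (sv : ℕ → Ω → S) (T : ℕ → Finset (Fin m))
    (hrate : ∀ i : Fin m, ent μ (f i) ≤ n * R)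
    (hdisj : ∀ k l, k < K → l < K → k ≠ l → Disjoint (T k) (T l))
    (hcover : ((Finset.range K).biUnion T).card = m)
    (hFano : ∀ k < K,
      centr μ (sv k) (fun ω => fun i : {x : Fin m // x ∈ T k} => f i.1 ω) ≤ n * ε)
    (hMarkov : ∀ k, 1 ≤ k → k < K →
      centr μ (sv k) (fun ω => fun i : Fin k => sv i ω)
        = centr μ (sv k) (sv (k - 1)))
    (hgap : ∀ k, 1 ≤ k → k < K → n * h ≤ centr μ (sv k) (sv (k - 1))) :
    ((K : ℝ) - 1) * n * h - (K : ℝ) * n * ε ≤ (m : ℝ) * n * R := by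
  set F : Ω → (Fin m → A) := fun ω => fun i => f i ω with hF
  -- Step 1: entropy of the sv-tuple is at least (K-1) n h
  have claim1 : ∀ k : ℕ, k + 1 ≤ K →
      (k : ℝ) * (n * h) ≤ ent μ (fun ω => fun i : Fin (k+1) => sv i ω) := by
    intro k
    induction k with
    | zero => intro _; simpa using ent_nonneg hμ (fun ω => fun i : Fin 1 => sv i ω)
    | succ k ih =>
      intro hk
      have h1 := ih (by omega)
      have hsn := ent_snoc hμ (k+1) (fun i : Fin (k+1+1) => sv i)
      simp only [Fin.val_last, Fin.coe_castSucc] at hsn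
      have hcentr : ent μ (fun ω => (sv (k+1) ω, fun i : Fin (k+1) => sv i ω))
          = centr μ (sv (k+1)) (fun ω => fun i : Fin (k+1) => sv i ω)
            + ent μ (fun ω => fun i : Fin (k+1) => sv i ω) := by
        rw [centr]; ring
      have hM := hMarkov (k+1) (by omega) (by omega)
      simp only [Nat.add_sub_cancel] at hM
      have hg := hgap (k+1) (by omega) (by omega)
      simp only [Nat.add_sub_cancel] at hg
      push_cast
      rw [hsn]
      push_cast at h1
      linarith
  have hK' : K - 1 + 1 = K := by omega
  have H1 : ((K : ℝ) - 1) * (n * h) ≤ ent μ (fun ω => fun i : Fin K => sv i ω) := by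
    have := claim1 (K - 1) (by omega)
    rw [hK'] at this
    rw [Nat.cast_sub hK] at this
    push_cast at this
    exact this
  -- Step 2: conditional subadditivity over the tuple
  have claim2 : ∀ k : ℕ, centr μ (fun ω => fun i : Fin k => sv i ω) F
      ≤ ∑ j ∈ Finset.range k, centr μ (sv j) F := by
    intro k
    induction k with
    | zero =>
      rw [Finset.range_zero, Finset.sum_empty]
      exact le_of_eq (centr_tuple0 hμ (fun i : Fin 0 => sv i) F)
    | succ k ih =>
      have hsn := ent_snoc_pair hμ k (fun i : Fin (k+1) => sv i) F
      simp only [Fin.val_last, Fin.coe_castSucc] at hsn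
      have e : centr μ (fun ω => fun i : Fin (k+1) => sv i ω) F
          = centr μ (fun ω => (sv k ω, fun i : Fin k => sv i ω)) F := by
        simp only [centr]
        rw [hsn]
      have hple := centr_pair_le hμ (sv k) (fun ω => fun i : Fin k => sv i ω) F
      rw [Finset.sum_range_succ]
      linarith
  -- Step 3: Fano bounds
  have H3 : ∀ j ∈ Finset.range K, centr μ (sv j) F ≤ n * ε := by
    intro j hj
    rw [Finset.mem_range] at hj
    have hcc := centr_comp_le hμ (sv j) F
      (fun v => fun i : {x : Fin m // x ∈ T j} => v i.1)
    exact hcc.trans (hFano j hj)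
  have H3' : ∑ j ∈ Finset.range K, centr μ (sv j) F ≤ (K : ℝ) * (n * ε) := by
    calc ∑ j ∈ Finset.range K, centr μ (sv j) F ≤ ∑ _j ∈ Finset.range K, n * ε :=
          Finset.sum_le_sum H3
      _ = (K : ℝ) * (n * ε) := by
          rw [Finset.sum_const, Finset.card_range, nsmul_eq_mul]
  -- Step 4: condition on F
  have H4 : ent μ (fun ω => fun i : Fin K => sv i ω)
      ≤ centr μ (fun ω => fun i : Fin K => sv i ω) F + ent μ F := by
    have hm := ent_mono hμ F (fun ω => fun i : Fin K => sv i ω)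
    have hs := ent_swap hμ F (fun ω => fun i : Fin K => sv i ω)
    simp only [centr]
    linarith
  -- Step 5: rate bound
  have H5 : ent μ F ≤ (m : ℝ) * (n * R) := by
    calc ent μ F ≤ ∑ i : Fin m, ent μ (f i) := ent_tuple_le hμ m f
      _ ≤ ∑ _i : Fin m, n * R := Finset.sum_le_sum (fun i _ => hrate i)
      _ = (m : ℝ) * (n * R) := by
          rw [Finset.sum_const, Finset.card_univ, Fintype.card_fin, nsmul_eq_mul]
  linarith [H1, claim2 K, H3', H4, H5]

end helpers
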